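/- Let A be an N×N complex matrix with ‖exp(tA)‖ ≤ 1 for all t ≥ 0, let k > 0, ε ≥ 0, and let g : [0,k] → ℂ^N be continuous. Let p, q : [0,k] → ℂ^N with p differentiable, p′(s) = A·q(s) + g(s) and ‖A·(p(s) − q(s))‖ ≤ ε for all s ∈ [0,k], and let W : [0,k] → ℂ^N be differentiable with W′(s) = A·W(s) + g(s) for all s ∈ [0,k]. Then for every s ∈ [0,k], ‖W(s) − p(s)‖ ≤ ‖W(0) − p(0)‖ + s·ε. -/

import Mathlib

open MeasureTheory Matrix

attribute [local instance] Matrix.linftyOpNormedAddCommGroup Matrix.linftyOpNormedRing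
  Matrix.linftyOpNormedAlgebra

noncomputable def mulVecCLM {N : ℕ} :
    Matrix (Fin N) (Fin N) ℂ →L[ℝ] (Fin N → ℂ) →L[ℝ] (Fin N → ℂ) :=
  LinearMap.toContinuousLinearMap
    { toFun := fun M => LinearMap.toContinuousLinearMap (M.mulVecLin.restrictScalars ℝ)
      map_add' := by
        intro M₁ M₂; ext v i
        simp [Matrix.mulVecLin, Matrix.add_mulVec]
      map_smul' := by
        intro c M; ext v i
        simp [Matrix.mulVecLin, Matrix.smul_mulVec] }

@[simp] theorem mulVecCLM_apply {N : ℕ} (M : Matrix (Fin N) (Fin N) ℂ) (v : Fin N → ℂ) :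
    mulVecCLM M v = M.mulVec v := rfl

set_option maxHeartbeats 1000000 in
/-- Comparison estimate: if `‖exp(tA)‖ ≤ 1` for `t ≥ 0`, `g` is continuous on `[0,k]`,
`p′(s) = A·q(s) + g(s)` with `‖A·(p(s) − q(s))‖ ≤ ε` on `[0,k]`, and `W′(s) = A·W(s) + g(s)`
on `[0,k]`, then `‖W(s) − p(s)‖ ≤ ‖W(0) − p(0)‖ + s·ε` for every `s ∈ [0,k]`. -/
theorem comparison_estimate {N : ℕ} (A : Matrix (Fin N) (Fin N) ℂ)
    (hA : ∀ t : ℝ, 0 ≤ t → ‖NormedSpace.exp (t • A)‖ ≤ 1)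
    (k : ℝ) (hk : 0 < k) (ε : ℝ) (hε : 0 ≤ ε)
    (g p q W : ℝ → Fin N → ℂ)
    (hg : ContinuousOn g (Set.Icc (0:ℝ) k))
    (hp : ∀ s ∈ Set.Icc (0:ℝ) k, HasDerivAt p (A.mulVec (q s) + g s) s)
    (hpq : ∀ s ∈ Set.Icc (0:ℝ) k, ‖A.mulVec (p s - q s)‖ ≤ ε)
    (hW : ∀ s ∈ Set.Icc (0:ℝ) k, HasDerivAt W (A.mulVec (W s) + g s) s) :
    ∀ s ∈ Set.Icc (0:ℝ) k, ‖W s - p s‖ ≤ ‖W 0 - p 0‖ + s * ε := by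
  intro s hs
  obtain ⟨hs0, hsk⟩ := hs
  set E : ℝ → Fin N → ℂ := fun τ => W τ - p τ with hEdef
  have hexp : (NormedSpace.exp : Matrix (Fin N) (Fin N) ℂ → _) = NormedSpace.exp :=
    rfl
  set M : ℝ → Matrix (Fin N) (Fin N) ℂ := fun τ => NormedSpace.exp ((s - τ) • A) with hMdef
  -- derivative of M
  have hM : ∀ τ : ℝ, HasDerivAt M ((-1 : ℝ) • (M τ * A)) τ := by
    intro τ
    have h1 : HasDerivAt (fun u : ℝ => NormedSpace.exp (u • A))
        (NormedSpace.exp ((s - τ) • A) * A) (s - τ) := by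
      rw [← hexp]
      exact hasDerivAt_exp_smul_const A (s - τ)
    have h2 : HasDerivAt (fun τ : ℝ => s - τ) (-1 : ℝ) τ := by
      simpa using (hasDerivAt_id τ).const_sub s
    exact h1.scomp τ h2
  -- derivative of E
  have hE : ∀ τ ∈ Set.Icc (0:ℝ) k,
      HasDerivAt E (A.mulVec (E τ) + A.mulVec (p τ - q τ)) τ := by
    intro τ hτ
    have := (hW τ hτ).sub (hp τ hτ)
    refine this.congr_deriv ?_
    have : A.mulVec (E τ) + A.mulVec (p τ - q τ) = A.mulVec (W τ - q τ) := by
      rw [← Matrix.mulVec_add]; congr 1; simp only [hEdef]; abel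
    rw [this]
    simp only [Matrix.mulVec_sub]
    abel
  -- derivative of y
  set y : ℝ → Fin N → ℂ := fun τ => mulVecCLM (M τ) (E τ) with hydef
  have hy : ∀ τ ∈ Set.Icc (0:ℝ) k,
      HasDerivAt y ((M τ).mulVec (A.mulVec (p τ - q τ))) τ := by
    intro τ hτ
    have hc : HasDerivAt (fun τ => mulVecCLM (M τ)) (mulVecCLM ((-1 : ℝ) • (M τ * A))) τ :=
      (mulVecCLM.hasFDerivAt.comp_hasDerivAt τ (hM τ))
    have := hc.clm_apply (hE τ hτ)
    refine this.congr_deriv ?_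
    simp only [mulVecCLM_apply, neg_one_smul, Matrix.neg_mulVec, Matrix.mulVec_mulVec,
      Matrix.mulVec_add]
    abel
  -- apply the mean value inequality on [0, s]
  have hsub : Set.Icc (0:ℝ) s ⊆ Set.Icc (0:ℝ) k :=
    Set.Icc_subset_Icc le_rfl hsk
  have hmvt : ‖y s - y 0‖ ≤ ε * ‖s - 0‖ := by
    apply Convex.norm_image_sub_le_of_norm_hasDerivWithin_le
      (f' := fun τ => (M τ).mulVec (A.mulVec (p τ - q τ)))
      (fun τ hτ => (hy τ (hsub hτ)).hasDerivWithinAt)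
      (fun τ hτ => ?_) (convex_Icc 0 s) (Set.left_mem_Icc.2 hs0) (Set.right_mem_Icc.2 hs0)
    calc ‖(M τ).mulVec (A.mulVec (p τ - q τ))‖
        ≤ ‖M τ‖ * ‖A.mulVec (p τ - q τ)‖ := Matrix.linfty_opNorm_mulVec _ _
      _ ≤ 1 * ε := by
          apply mul_le_mul (hA _ (by simp [sub_nonneg]; exact hτ.2))
            (hpq τ (hsub hτ)) (norm_nonneg _) zero_le_one
      _ = ε := one_mul ε
  have hys : y s = E s := by
    simp [hydef, hMdef, NormedSpace.exp_zero, Matrix.one_mulVec]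
  have hM0 : M 0 = NormedSpace.exp (s • A) := by simp [hMdef]
  have hy0 : ‖y 0‖ ≤ ‖E 0‖ := by
    calc ‖y 0‖ = ‖(M 0).mulVec (E 0)‖ := rfl
      _ ≤ ‖M 0‖ * ‖E 0‖ := Matrix.linfty_opNorm_mulVec _ _
      _ ≤ 1 * ‖E 0‖ := by
          rw [hM0]
          exact mul_le_mul_of_nonneg_right (hA s hs0) (norm_nonneg _)
      _ = ‖E 0‖ := one_mul _
  have : ‖E s‖ ≤ ‖y 0‖ + ε * s := by
    have := norm_sub_norm_le (y s) (y 0) |>.trans hmvt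
    rw [hys] at this
    simp only [sub_zero] at this
    rw [Real.norm_of_nonneg hs0] at this
    linarith
  calc ‖W s - p s‖ = ‖E s‖ := rfl
    _ ≤ ‖y 0‖ + ε * s := this
    _ ≤ ‖E 0‖ + ε * s := by linarith
    _ = ‖W 0 - p 0‖ + s * ε := by rw [mul_comm]
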